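/- Let T be a consistent c.e. extension of PA and let A(p1,...,pn,q1,...,qm) be a propositional formula such that for every f : {1,...,m} → {0,1}, A(p⃗, ⊤^{f(1)},...,⊤^{f(m)}) is contingent. Then for any arithmetic sentences ψ1,...,ψm and any Σ1 sentence σ, there exist arithmetic sentences φ1,...,φn such that PA + Con_T proves σ ↔ Pr_T(⌜A(φ1,...,φn,ψ1,...,ψm)⌝). -/

import Mathlib

/-- An abstract setting for the arithmetic of provability: a type of sentences
of the language of arithmetic with falsity and implication, a provability
predicate `pr` (the sentence `Pr_T(⌜·⌝)`), provability in PA and in the fixed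
consistent c.e. extension `T` of PA, the class of Σ₁ sentences, and truth in
the standard model ℕ. -/
structure PASetup where
  Sent : Type
  fal : Sent
  imp : Sent → Sent → Sent
  pr : Sent → Sent
  PAPrv : Sent → Prop
  TPrv : Sent → Prop
  Sigma1 : Sent → Prop
  TrueN : Sent → Prop

namespace PASetup

def neg (S : PASetup) (A : S.Sent) : S.Sent := S.imp A S.fal
def conj (S : PASetup) (A B : S.Sent) : S.Sent := S.neg (S.imp A (S.neg B))
def disj (S : PASetup) (A B : S.Sent) : S.Sent := S.imp (S.neg A) B
def biimp (S : PASetup) (A B : S.Sent) : S.Sent := S.conj (S.imp A B) (S.imp B A)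
/-- `Con_T := ¬Pr_T(⌜0=1⌝)`. -/
def con (S : PASetup) : S.Sent := S.neg (S.pr S.fal)
/-- Provability in `PA + Con_T` (via the deduction theorem). -/
def PAConPrv (S : PASetup) (A : S.Sent) : Prop := S.PAPrv (S.imp S.con A)

/-- Iterated consistency statements: `Con_T^0 := (0=0)`,
`Con_T^{n+1} := ¬Pr_T(⌜¬Con_T^n⌝)`. -/
def conIter (S : PASetup) : ℕ → S.Sent
  | 0 => S.neg S.fal
  | n+1 => S.neg (S.pr (S.neg (conIter S n)))

/-- `A` is an instance of a propositional tautology. -/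
def TautInst (S : PASetup) (A : S.Sent) : Prop :=
  ∀ v : S.Sent → Bool, (∀ B C, v (S.imp B C) = (!(v B) || v C)) →
    v S.fal = false → v A = true

/-- The standard facts assumed about `PA`, `T`, and the natural Σ₁ provability
predicate `Pr_T` (closure under propositional logic, consistency of `T`, the
Hilbert–Bernays–Löb derivability conditions, provable Σ₁-completeness, Löb's
theorem, soundness of PA, and the semantics of truth in ℕ). -/
structure Facts (S : PASetup) : Prop where
  pa_taut : ∀ A, S.TautInst A → S.PAPrv A
  pa_mp : ∀ A B, S.PAPrv (S.imp A B) → S.PAPrv A → S.PAPrv B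
  pa_t : ∀ A, S.PAPrv A → S.TPrv A
  t_taut : ∀ A, S.TautInst A → S.TPrv A
  t_mp : ∀ A B, S.TPrv (S.imp A B) → S.TPrv A → S.TPrv B
  t_con : ¬ S.TPrv S.fal
  d1 : ∀ A, S.TPrv A → S.PAPrv (S.pr A)
  d2 : ∀ A B, S.PAPrv (S.imp (S.pr (S.imp A B)) (S.imp (S.pr A) (S.pr B)))
  d3 : ∀ A, S.Sigma1 A → S.PAPrv (S.imp A (S.pr A))
  sigma1_pr : ∀ A, S.Sigma1 (S.pr A)
  sigma1_fal : S.Sigma1 S.fal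
  sigma1_top : S.Sigma1 (S.neg S.fal)
  prv_of_incon : ∀ A, S.PAPrv (S.imp (S.neg S.con) (S.pr A))
  lob : ∀ A, S.TPrv (S.imp (S.pr A) A) → S.TPrv A
  pa_sound : ∀ A, S.PAPrv A → S.TrueN A
  true_imp : ∀ A B, S.TrueN (S.imp A B) ↔ (S.TrueN A → S.TrueN B)
  true_fal : ¬ S.TrueN S.fal
  true_pr : ∀ A, S.TrueN (S.pr A) ↔ S.TPrv A

end PASetup

/-- Classical propositional formulas over variable type `α`. -/
inductive PropForm (α : Type) : Type
  | var : α → PropForm α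
  | fal : PropForm α
  | imp : PropForm α → PropForm α → PropForm α

namespace PropForm

variable {α β : Type}

def neg (A : PropForm α) : PropForm α := imp A fal
def top : PropForm α := neg fal
def conj (A B : PropForm α) : PropForm α := neg (imp A (neg B))
def disj (A B : PropForm α) : PropForm α := imp (neg A) B
def biimp (A B : PropForm α) : PropForm α := conj (imp A B) (imp B A)
/-- `⊤^1 = ⊤`, `⊤^0 = ⊥`. -/
def const (b : Bool) : PropForm α := if b then top else fal

def eval (v : α → Bool) : PropForm α → Bool
  | var a => v a
  | fal => false
  | imp A B => !(eval v A) || eval v B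

/-- Simultaneous substitution. -/
def subst (s : α → PropForm β) : PropForm α → PropForm β
  | var a => s a
  | fal => fal
  | imp A B => imp (subst s A) (subst s B)

def Taut (A : PropForm α) : Prop := ∀ v, eval v A = true
def Unsat (A : PropForm α) : Prop := ∀ v, eval v A = false
def Contingent (A : PropForm α) : Prop := ¬ Taut A ∧ ¬ Unsat A

end PropForm

/-- Substitution of arithmetic sentences for the variables of a propositional
formula. -/
def PASetup.interp (S : PASetup) {α : Type} (g : α → S.Sent) : PropForm α → S.Sent
  | PropForm.var a => g a
  | PropForm.fal => S.fal
  | PropForm.imp A B => S.imp (S.interp g A) (S.interp g B)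


namespace PropForm

variable {α β : Type}

theorem eval_subst (s : α → PropForm β) (v : β → Bool) (A : PropForm α) :
    eval v (subst s A) = eval (fun a => eval v (s a)) A := by
  induction A with
  | var a => rfl
  | fal => rfl
  | imp A B ihA ihB => simp [subst, eval, ihA, ihB]

theorem eval_const (v : α → Bool) (b : Bool) : eval v (const b) = b := by
  cases b <;> rfl

theorem eval_neg (v : α → Bool) (A : PropForm α) : eval v (neg A) = !eval v A := by
  simp [neg, eval]

theorem eval_disj (v : α → Bool) (A B : PropForm α) :
    eval v (disj A B) = (eval v A || eval v B) := by
  simp [disj, neg, eval]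

theorem eval_conj (v : α → Bool) (A B : PropForm α) :
    eval v (conj A B) = (eval v A && eval v B) := by
  simp [conj, neg, eval]

def bigDisj : List (PropForm α) → PropForm α
  | [] => fal
  | A :: l => disj A (bigDisj l)

theorem eval_bigDisj (v : α → Bool) (l : List (PropForm α)) :
    eval v (bigDisj l) = l.any (eval v) := by
  induction l with
  | nil => rfl
  | cons A l ih => simp [bigDisj, eval_disj, ih]

def bigConj : List (PropForm α) → PropForm α
  | [] => top
  | A :: l => conj A (bigConj l)

theorem eval_bigConj (v : α → Bool) (l : List (PropForm α)) :
    eval v (bigConj l) = l.all (eval v) := by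
  induction l with
  | nil => rfl
  | cons A l ih => simp [bigConj, eval_conj, ih]

noncomputable def charForm [Fintype α] (w : α → Bool) : PropForm α :=
  bigConj (Finset.univ.toList.map fun a => if w a then var a else neg (var a))

theorem eval_charForm_iff [Fintype α] (v w : α → Bool) :
    eval v (charForm w) = true ↔ v = w := by
  rw [charForm, eval_bigConj]
  simp only [List.all_eq_true, List.mem_map, Finset.mem_toList, Finset.mem_univ, true_and]
  constructor
  · intro h
    funext a
    have := h _ ⟨a, rfl⟩
    by_cases hw : w a = true
    · simp only [hw, if_true, eval] at this; simp [this, hw]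
    · simp only [hw, if_false, eval_neg, eval] at this
      simp only [Bool.not_eq_true] at hw
      rw [hw]
      simpa [eval_neg, eval] using this
  · rintro rfl B ⟨a, rfl⟩
    by_cases hw : v a = true <;> simp [hw, eval, eval_neg]

noncomputable def ofFun [Fintype α] [DecidableEq α] (G : (α → Bool) → Bool) : PropForm α :=
  bigDisj ((Finset.univ.toList.filter G).map charForm)

theorem eval_ofFun [Fintype α] [DecidableEq α] (G : (α → Bool) → Bool) (v : α → Bool) :
    eval v (ofFun G) = G v := by
  rw [Bool.eq_iff_iff, ofFun, eval_bigDisj]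
  simp only [List.any_eq_true, List.mem_map, List.mem_filter, Finset.mem_toList,
    Finset.mem_univ, true_and]
  constructor
  · rintro ⟨B, ⟨w, hw, rfl⟩, hev⟩
    rw [eval_charForm_iff] at hev
    subst hev; exact hw
  · intro h
    exact ⟨charForm v, ⟨v, h, rfl⟩, (eval_charForm_iff v v).2 rfl⟩

end PropForm

namespace PASetup

variable {γ : Type}

theorem v_interp (S : PASetup) (v : S.Sent → Bool)
    (himp : ∀ B C, v (S.imp B C) = (!(v B) || v C)) (hfal : v S.fal = false)
    (g : γ → S.Sent) (A : PropForm γ) :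
    v (S.interp g A) = PropForm.eval (fun a => v (g a)) A := by
  induction A with
  | var a => rfl
  | fal => exact hfal
  | imp A B ihA ihB => rw [PASetup.interp, himp, ihA, ihB]; rfl

theorem tautInst_interp (S : PASetup) (g : γ → S.Sent) (A : PropForm γ)
    (h : PropForm.Taut A) : S.TautInst (S.interp g A) := by
  intro v hv hf
  rw [S.v_interp v hv hf g A]
  exact h _

/-- interp commutes with biimp. -/
theorem interp_biimp (S : PASetup) (g : γ → S.Sent) (B C : PropForm γ) :
    S.interp g (PropForm.biimp B C) = S.biimp (S.interp g B) (S.interp g C) := rfl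

end PASetup

/-- assuming the FGH theorem: if `A(p⃗,⊤^{f(1)},…,⊤^{f(m)})` is
contingent for all `f`, then for all sentences `ψ₁,…,ψₘ` and every Σ₁ sentence
`σ` there are sentences `φ₁,…,φₙ` with
`PA + Con_T ⊢ σ ↔ Pr_T(⌜A(φ₁,…,φₙ,ψ₁,…,ψₘ)⌝)`. -/
theorem fgh_prop_form_param (S : PASetup) (hS : S.Facts)
    (fgh : ∀ σ, S.Sigma1 σ → ∃ φ, S.PAConPrv (S.biimp σ (S.pr φ)))
    (n m : ℕ) (A : PropForm (Fin n ⊕ Fin m))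
    (hA : ∀ f : Fin m → Bool,
      PropForm.Contingent (A.subst fun x =>
        match x with
        | Sum.inl i => PropForm.var i
        | Sum.inr j => PropForm.const (f j))) :
    ∀ ψ : Fin m → S.Sent, ∀ σ, S.Sigma1 σ →
      ∃ φ : Fin n → S.Sent,
        S.PAConPrv (S.biimp σ (S.pr (S.interp (Sum.elim φ ψ) A))) := by
  intro ψ σ hσ
  obtain ⟨ρ, hρ⟩ := fgh σ hσ
  -- evaluation of the substituted formula
  have keyev : ∀ (v : Fin n → Bool) (f : Fin m → Bool),
      PropForm.eval v (A.subst fun x =>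
        match x with
        | Sum.inl i => PropForm.var i
        | Sum.inr j => PropForm.const (f j)) = PropForm.eval (Sum.elim v f) A := by
    intro v f
    rw [PropForm.eval_subst]
    congr 1
    funext x
    cases x with
    | inl i => rfl
    | inr j => exact PropForm.eval_const v (f j)
  -- witnesses from contingency
  have ht : ∀ f : Fin m → Bool, ∃ t : Fin n → Bool, PropForm.eval (Sum.elim t f) A = true := by
    intro f
    obtain ⟨-, h2⟩ := hA f
    rw [PropForm.Unsat] at h2
    push_neg at h2
    obtain ⟨t, h⟩ := h2
    rw [keyev] at h
    exact ⟨t, eq_true_of_ne_false h⟩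
  have hs : ∀ f : Fin m → Bool, ∃ t : Fin n → Bool, PropForm.eval (Sum.elim t f) A = false := by
    intro f
    obtain ⟨h1, -⟩ := hA f
    rw [PropForm.Taut] at h1
    push_neg at h1
    obtain ⟨t, h⟩ := h1
    rw [keyev] at h
    exact ⟨t, eq_false_of_ne_true h⟩
  set t : (Fin m → Bool) → Fin n → Bool := fun f => (ht f).choose with htdef
  set s : (Fin m → Bool) → Fin n → Bool := fun f => (hs f).choose with hsdef
  have htspec : ∀ f, PropForm.eval (Sum.elim (t f) f) A = true := fun f => (ht f).choose_spec
  have hsspec : ∀ f, PropForm.eval (Sum.elim (s f) f) A = false := fun f => (hs f).choose_spec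
  -- the sentences φ
  set g : (Fin m ⊕ Unit) → S.Sent := Sum.elim ψ (fun _ => ρ) with hgdef
  set G : Fin n → ((Fin m ⊕ Unit) → Bool) → Bool :=
    fun i w => if w (Sum.inr ()) then t (w ∘ Sum.inl) i else s (w ∘ Sum.inl) i with hGdef
  set φ : Fin n → S.Sent := fun i => S.interp g (PropForm.ofFun (G i)) with hφdef
  refine ⟨φ, ?_⟩
  set X : S.Sent := S.interp (Sum.elim φ ψ) A with hXdef
  -- PA proves X ↔ ρ
  have hX : S.PAPrv (S.biimp X ρ) := by
    apply hS.pa_taut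
    intro v hv hf
    have hvX : v X = v ρ := by
      rw [hXdef, S.v_interp v hv hf]
      have hφv : ∀ i, v (φ i) = (if v ρ then t (fun j => v (ψ j)) i else s (fun j => v (ψ j)) i) := by
        intro i
        rw [hφdef]
        rw [S.v_interp v hv hf, PropForm.eval_ofFun]
        rfl
      have : (fun x => v (Sum.elim φ ψ x)) =
          Sum.elim (if v ρ then t (fun j => v (ψ j)) else s (fun j => v (ψ j))) (fun j => v (ψ j)) := by
        funext x
        cases x with
        | inl i =>
          simp only [Sum.elim_inl, hφv i]
          by_cases hb : v ρ = true <;> simp [hb]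
        | inr j => rfl
      rw [this]
      by_cases hb : v ρ = true
      · rw [hb]; simp only [if_true]; exact htspec _
      · rw [Bool.not_eq_true] at hb; rw [hb]; simp only [Bool.false_eq_true, if_false]
        exact hsspec _
    simp only [PASetup.biimp, PASetup.conj, PASetup.neg, hv, hf, hvX]
    cases v ρ <;> rfl
  -- derived implications
  have taut1 : PropForm.Taut (PropForm.imp (PropForm.biimp (PropForm.var false) (PropForm.var true))
      (PropForm.imp (PropForm.var false) (PropForm.var true)) : PropForm Bool) := by unfold PropForm.Taut; decide
  have taut2 : PropForm.Taut (PropForm.imp (PropForm.biimp (PropForm.var false) (PropForm.var true))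
      (PropForm.imp (PropForm.var true) (PropForm.var false)) : PropForm Bool) := by unfold PropForm.Taut; decide
  have h1 : S.PAPrv (S.imp X ρ) :=
    hS.pa_mp _ _ (hS.pa_taut _ (S.tautInst_interp (fun b => cond b ρ X) _ taut1)) hX
  have h2 : S.PAPrv (S.imp ρ X) :=
    hS.pa_mp _ _ (hS.pa_taut _ (S.tautInst_interp (fun b => cond b ρ X) _ taut2)) hX
  have hq1 : S.PAPrv (S.imp (S.pr X) (S.pr ρ)) :=
    hS.pa_mp _ _ (hS.d2 X ρ) (hS.d1 _ (hS.pa_t _ h1))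
  have hq2 : S.PAPrv (S.imp (S.pr ρ) (S.pr X)) :=
    hS.pa_mp _ _ (hS.d2 ρ X) (hS.d1 _ (hS.pa_t _ h2))
  -- combine with FGH
  have taut3 : PropForm.Taut (PropForm.imp (PropForm.imp (PropForm.var 0) (PropForm.var 1))
      (PropForm.imp (PropForm.imp (PropForm.var 1) (PropForm.var 0))
        (PropForm.imp (PropForm.imp (PropForm.var 3) (PropForm.biimp (PropForm.var 2) (PropForm.var 1)))
          (PropForm.imp (PropForm.var 3) (PropForm.biimp (PropForm.var 2) (PropForm.var 0))))) :
      PropForm (Fin 4)) := by unfold PropForm.Taut; decide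
  exact hS.pa_mp _ _ (hS.pa_mp _ _ (hS.pa_mp _ _
    (hS.pa_taut _ (S.tautInst_interp
      (fun k : Fin 4 => if k = 0 then S.pr X else if k = 1 then S.pr ρ else if k = 2 then σ else S.con)
      _ taut3)) hq1) hq2) hρ
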